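/- Every tree (connected acyclic graph, possibly infinite with bounded degree) has Nagata dimension at most 1 at every scale r with constant c = 3: there exist two collections of vertex subsets covering V, each r-separated and 3r-bounded. -/

import Mathlib

/-- The ball of radius `ρ` around `v` in the shortest-path metric of `G`. -/
noncomputable def gball {V : Type*} (G : SimpleGraph V) (v : V) (ρ : ℝ) : Set V :=
  {u | G.Reachable v u ∧ (G.dist v u : ℝ) ≤ ρ}

/-- Two vertex sets are `s`-separated if any two vertices, one in each,
are at graph distance at least `s`. -/
def SepSets {V : Type*} (G : SimpleGraph V) (s : ℝ) (A B : Set V) : Prop :=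
  ∀ a ∈ A, ∀ b ∈ B, ¬ G.Reachable a b ∨ s ≤ (G.dist a b : ℝ)

/-- A vertex set is `D`-bounded if its vertices are pairwise at distance at most `D`. -/
def BoundedSet {V : Type*} (G : SimpleGraph V) (D : ℝ) (B : Set V) : Prop :=
  ∀ a ∈ B, ∀ b ∈ B, G.Reachable a b ∧ (G.dist a b : ℝ) ≤ D

/-- `G` has Assouad dimension at most `β` at scale `R` with constant `C`:
for all `0 < r < R`, any ball of radius `R` can be covered by at most
`C * (R/r)^β` balls of radius `r`. -/
def AssouadLE {V : Type*} (G : SimpleGraph V) (β R C : ℝ) : Prop :=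
  ∀ r : ℝ, 0 < r → r < R → ∀ v : V, ∃ centers : Finset V,
    (centers.card : ℝ) ≤ C * (R / r) ^ β ∧
    gball G v R ⊆ ⋃ c ∈ centers, gball G c r

/-- `G` has Nagata dimension at most `1` at scale `r` with constant `c`:
two collections of vertex subsets covering `V`, each `r`-separated,
whose members are all `c*r`-bounded. -/
def NagataLE1 {V : Type*} (G : SimpleGraph V) (r c : ℝ) : Prop :=
  ∃ 𝔅 : Fin 2 → Set (Set V),
    (∀ v : V, ∃ i : Fin 2, ∃ B ∈ 𝔅 i, v ∈ B) ∧
    (∀ i : Fin 2, ∀ B ∈ 𝔅 i, ∀ B' ∈ 𝔅 i, B ≠ B' → SepSets G r B B') ∧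
    (∀ i : Fin 2, ∀ B ∈ 𝔅 i, BoundedSet G (c * r) B)

/-- The vertex boundary of `U`: vertices outside `U` adjacent to some vertex of `U`. -/
def vBoundary {V : Type*} (G : SimpleGraph V) (U : Set V) : Set V :=
  {v | v ∉ U ∧ ∃ u ∈ U, G.Adj u v}

namespace TreeNagataAux
open SimpleGraph Walk

variable {V : Type*} {G : SimpleGraph V}

lemma path_length_eq (hconn : G.Connected) (hacyclic : G.IsAcyclic)
    {u v : V} {p : G.Walk u v} (hp : p.IsPath) : p.length = G.dist u v := by
  obtain ⟨q, hq, hql⟩ := hconn.exists_path_of_dist u v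
  have h := hacyclic.path_unique (⟨p, hp⟩ : G.Path u v) ⟨q, hq⟩
  rw [show p = q from congrArg Subtype.val h, hql]

lemma parent_unique (hconn : G.Connected) (hacyclic : G.IsAcyclic) (root : V)
    {p q u : V} (hp : G.Adj p u) (hq : G.Adj q u)
    (hdp : G.dist root p + 1 = G.dist root u) (hdq : G.dist root q + 1 = G.dist root u) :
    p = q := by
  classical
  obtain ⟨Rp, hRp, hRpl⟩ := hconn.exists_path_of_dist root p
  obtain ⟨Rq, hRq, hRql⟩ := hconn.exists_path_of_dist root q
  have hup : u ∉ Rp.support := by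
    intro hu
    have h1 := SimpleGraph.dist_le (Rp.takeUntil u hu)
    have h2 := Rp.length_takeUntil_le hu
    omega
  have huq : u ∉ Rq.support := by
    intro hu
    have h1 := SimpleGraph.dist_le (Rq.takeUntil u hu)
    have h2 := Rq.length_takeUntil_le hu
    omega
  have W1 : (Walk.cons hp.symm Rp.reverse).IsPath := by
    rw [Walk.cons_isPath_iff]
    exact ⟨hRp.reverse, by simpa [Walk.support_reverse] using hup⟩
  have W2 : (Walk.cons hq.symm Rq.reverse).IsPath := by
    rw [Walk.cons_isPath_iff]
    exact ⟨hRq.reverse, by simpa [Walk.support_reverse] using huq⟩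
  have h := hacyclic.path_unique (⟨_, W1⟩ : G.Path u root) ⟨_, W2⟩
  have hw : Walk.cons hp.symm Rp.reverse = Walk.cons hq.symm Rq.reverse :=
    congrArg Subtype.val h
  have h1 := congrArg (fun w : G.Walk u root => w.getVert 1) hw
  simpa [Walk.getVert_cons_succ, Walk.getVert_zero] using h1

lemma depth_step (hconn : G.Connected) (hacyclic : G.IsAcyclic) (root : V)
    {u v : V} (h : G.Adj u v) :
    G.dist root v = G.dist root u + 1 ∨ G.dist root u = G.dist root v + 1 := by
  classical
  have e1 : G.dist u v ≤ 1 := by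
    have := SimpleGraph.dist_le (Walk.cons h Walk.nil)
    simpa using this
  have e2 : G.dist v u ≤ 1 := by
    have := SimpleGraph.dist_le (Walk.cons h.symm Walk.nil)
    simpa using this
  have t1 : G.dist root v ≤ G.dist root u + G.dist u v := hconn.dist_triangle
  have t2 : G.dist root u ≤ G.dist root v + G.dist v u := hconn.dist_triangle
  have hne : G.dist root u ≠ G.dist root v := by
    intro heq
    obtain ⟨Ru, hRu, hRul⟩ := hconn.exists_path_of_dist root u
    by_cases hv : v ∈ Ru.support
    · have htp : (Ru.takeUntil v hv).IsPath := hRu.takeUntil hv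
      have hl1 : (Ru.takeUntil v hv).length = G.dist root v :=
        path_length_eq hconn hacyclic htp
      have hspec := Ru.take_spec hv
      have hlapp := congrArg Walk.length hspec
      rw [Walk.length_append] at hlapp
      have h0 : (Ru.dropUntil v hv).length = 0 := by omega
      exact h.ne (Walk.eq_of_length_eq_zero h0).symm
    · have W : (Walk.cons h.symm Ru.reverse).IsPath := by
        rw [Walk.cons_isPath_iff]
        exact ⟨hRu.reverse, by simpa [Walk.support_reverse] using hv⟩
      have hl : (Walk.cons h.symm Ru.reverse).length = G.dist v root :=
        path_length_eq hconn hacyclic W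
      rw [Walk.length_cons, Walk.length_reverse] at hl
      rw [SimpleGraph.dist_comm] at hl
      omega
  omega

lemma ascend (hconn : G.Connected) (hacyclic : G.IsAcyclic) (root : V)
    {a b : V} (P : G.Walk a b) :
    P.IsPath → ∀ prev, G.Adj prev a → G.dist root a = G.dist root prev + 1 →
    prev ∉ P.support → G.dist root b = G.dist root a + P.length := by
  induction P with
  | nil => intros; simp
  | @cons a c b h Q ih =>
    intro hP prev hadj hd hns
    rw [Walk.cons_isPath_iff] at hP
    rcases depth_step hconn hacyclic root h with hup | hdown
    · have := ih hP.1 a h hup hP.2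
      rw [Walk.length_cons]; omega
    · exfalso
      have hcp : c = prev :=
        parent_unique hconn hacyclic root h.symm hadj (by omega) (by omega)
      apply hns
      rw [← hcp, Walk.support_cons]
      exact List.mem_cons_of_mem _ Q.start_mem_support

lemma upper (hconn : G.Connected) (hacyclic : G.IsAcyclic) (root : V) (t : ℕ)
    {a b : V} (P : G.Walk a b) :
    P.IsPath → (∀ z ∈ P.support, t ≤ G.dist root z) →
    P.length + 2 * t ≤ G.dist root a + G.dist root b := by
  induction P with
  | nil =>
    intro _ hs
    have := hs _ (Walk.start_mem_support _)
    simp only [Walk.length_nil]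
    omega
  | @cons a c b h Q ih =>
    intro hP hs
    rw [Walk.cons_isPath_iff] at hP
    have hta : t ≤ G.dist root a := hs a (by rw [Walk.support_cons]; exact List.mem_cons_self)
    rcases depth_step hconn hacyclic root h with hup | hdown
    · have hb := ascend hconn hacyclic root Q hP.1 a h hup hP.2
      rw [Walk.length_cons]; omega
    · have hih := ih hP.1 (fun z hz => hs z (by rw [Walk.support_cons]; exact List.mem_cons_of_mem _ hz))
      rw [Walk.length_cons]; omega

lemma split_est (hconn : G.Connected) (root : V) {a b z : V} (P : G.Walk a b)
    (hlen : P.length = G.dist a b) (hz : z ∈ P.support) :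
    G.dist root a + G.dist root b ≤ G.dist a b + 2 * G.dist root z := by
  classical
  have h1 : G.dist a z ≤ (P.takeUntil z hz).length := SimpleGraph.dist_le _
  have h2 : G.dist z b ≤ (P.dropUntil z hz).length := SimpleGraph.dist_le _
  have h3 : (P.takeUntil z hz).length + (P.dropUntil z hz).length = P.length := by
    rw [← Walk.length_append, Walk.take_spec]
  have t1 : G.dist root a ≤ G.dist root z + G.dist z a := hconn.dist_triangle
  have t2 : G.dist root b ≤ G.dist root z + G.dist z b := hconn.dist_triangle
  have c1 : G.dist z a = G.dist a z := SimpleGraph.dist_comm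
  omega

end TreeNagataAux

/-- Every tree (connected acyclic graph, possibly infinite with bounded degree)
has Nagata dimension at most `1` at every scale `r > 0` with constant `3`. -/
theorem tree_nagata_dim_le_one {V : Type*} (G : SimpleGraph V)
    (hconn : G.Connected) (hacyclic : G.IsAcyclic)
    (hdeg : ∃ D : ℕ, ∀ v : V, (G.neighborSet v).Finite ∧ (G.neighborSet v).ncard ≤ D) :
    ∀ r : ℝ, 0 < r → NagataLE1 G r 3 := by
  intro r hr
  classical
  obtain ⟨root⟩ := hconn.nonempty
  by_cases hr1 : r ≤ 1
  · -- singleton clusters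
    refine ⟨fun _ => {B | ∃ v : V, B = {v}}, ?_, ?_, ?_⟩
    · intro v; exact ⟨0, {v}, ⟨v, rfl⟩, rfl⟩
    · rintro i B ⟨v, rfl⟩ B' ⟨v', rfl⟩ hne a ha b hb
      right
      rw [Set.mem_singleton_iff] at ha hb
      have hvv : a ≠ b := by
        rw [ha, hb]; exact fun h => hne (by rw [h])
      have h1 : 1 ≤ G.dist a b := hconn.pos_dist_of_ne hvv
      calc r ≤ 1 := hr1
        _ ≤ (G.dist a b : ℝ) := by exact_mod_cast h1
    · rintro i B ⟨v, rfl⟩ a ha b hb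
      rw [Set.mem_singleton_iff] at ha hb; subst ha; subst hb
      refine ⟨hconn b b, ?_⟩
      simp only [SimpleGraph.dist_self, Nat.cast_zero]
      positivity
  · push_neg at hr1
    set n := ⌈r⌉₊ with hn
    have hn2 : 2 ≤ n := by
      have h : 1 < ⌈r⌉₊ := by
        rw [Nat.lt_ceil]; exact_mod_cast hr1
      omega
    have hrn : r ≤ (n : ℝ) := Nat.le_ceil r
    have hnr : (n : ℝ) < r + 1 := Nat.ceil_lt_add_one (le_of_lt hr)
    set w : ℕ := n - 1 with hwdef
    set m : ℕ := (n - 1) / 2 with hmdef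
    have hw1 : 1 ≤ w := by omega
    -- the relation: connected by a walk staying at depth ≥ k*w - m
    set Rel : ℕ → V → V → Prop :=
      fun k x y => ∃ W : G.Walk x y, ∀ z ∈ W.support, k * w - m ≤ G.dist root z with hRel
    have Rsymm : ∀ k x y, Rel k x y → Rel k y x := by
      rintro k x y ⟨W, hW⟩
      exact ⟨W.reverse, fun z hz => hW z
        (by rwa [SimpleGraph.Walk.support_reverse, List.mem_reverse] at hz)⟩
    have Rtrans : ∀ k x y z, Rel k x y → Rel k y z → Rel k x z := by
      rintro k x y z ⟨W1, hW1⟩ ⟨W2, hW2⟩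
      refine ⟨W1.append W2, fun u hu => ?_⟩
      rcases (SimpleGraph.Walk.mem_support_append_iff _ _).mp hu with h | h
      · exact hW1 u h
      · exact hW2 u h
    set Cl : ℕ → V → Set V := fun k x => {y | G.dist root y / w = k ∧ Rel k x y} with hCl
    refine ⟨fun i => {C | ∃ v : V, (G.dist root v / w) % 2 = i.val ∧
      C = Cl (G.dist root v / w) v}, ?_, ?_, ?_⟩
    · -- cover
      intro v
      refine ⟨⟨(G.dist root v / w) % 2, Nat.mod_lt _ (by norm_num)⟩,
        Cl (G.dist root v / w) v, ⟨v, rfl, rfl⟩, ?_⟩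
      refine ⟨rfl, SimpleGraph.Walk.nil, ?_⟩
      intro z hz
      rw [SimpleGraph.Walk.mem_support_nil_iff] at hz
      rw [hz]
      calc (G.dist root v / w) * w - m ≤ (G.dist root v / w) * w := Nat.sub_le _ _
        _ ≤ G.dist root v := Nat.div_mul_le_self _ _
    · -- separation
      rintro i B ⟨v, hpv, rfl⟩ B' ⟨v', hpv', rfl⟩ hne a ⟨hka, hva⟩ b ⟨hkb, hvb⟩
      right
      suffices h : n ≤ G.dist a b by
        calc r ≤ (n : ℝ) := hrn
          _ ≤ (G.dist a b : ℝ) := by exact_mod_cast h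
      set k := G.dist root v / w with hk
      set k' := G.dist root v' / w with hk'
      have hKa : k * w ≤ G.dist root a := by
        rw [← hka]; exact Nat.div_mul_le_self _ _
      have hKb : k' * w ≤ G.dist root b := by
        rw [← hkb]; exact Nat.div_mul_le_self _ _
      have hUa : G.dist root a < k * w + w := by
        have h1 := Nat.div_add_mod' (G.dist root a) w
        have h2 : G.dist root a % w < w := Nat.mod_lt _ (by omega)
        rw [hka] at h1; omega
      have hUb : G.dist root b < k' * w + w := by
        have h1 := Nat.div_add_mod' (G.dist root b) w
        have h2 : G.dist root b % w < w := Nat.mod_lt _ (by omega)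
        rw [hkb] at h1; omega
      by_cases hkk : k = k'
      · -- same annulus: different classes
        have hnrel : ¬ Rel k a b := by
          intro hab
          apply hne
          have hvv' : Rel k v v' := by
            apply Rtrans k v b v' (Rtrans k v a b hva hab)
            rw [hkk]; exact Rsymm _ _ _ hvb
          have heq : Cl k v = Cl k v' := by
            ext y
            constructor
            · rintro ⟨hy1, hy2⟩; exact ⟨hy1, Rtrans _ _ _ _ (Rsymm _ _ _ hvv') hy2⟩
            · rintro ⟨hy1, hy2⟩; exact ⟨hy1, Rtrans _ _ _ _ hvv' hy2⟩
          rw [heq, hkk]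
        obtain ⟨P, hP, hPl⟩ := hconn.exists_path_of_dist a b
        have hex : ∃ z ∈ P.support, G.dist root z < k * w - m := by
          by_contra hno
          push_neg at hno
          exact hnrel ⟨P, hno⟩
        obtain ⟨z, hz, hzd⟩ := hex
        have hsp := TreeNagataAux.split_est hconn root P hPl hz
        rw [← hkk] at hKb hUb
        omega
      · -- different annuli of the same parity
        have hpar : k % 2 = k' % 2 := by rw [hpv, hpv']
        have t1 : G.dist root b ≤ G.dist root a + G.dist a b := hconn.dist_triangle
        have t2 : G.dist root a ≤ G.dist root b + G.dist b a := hconn.dist_triangle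
        have hc : G.dist b a = G.dist a b := SimpleGraph.dist_comm
        rw [hc] at t2
        have hsplit : k + 2 ≤ k' ∨ k' + 2 ≤ k := by omega
        rcases hsplit with hlt | hlt
        · have h2 : k * w + 2 * w ≤ k' * w := by
            calc k * w + 2 * w = (k + 2) * w := by ring
              _ ≤ k' * w := Nat.mul_le_mul_right w hlt
          omega
        · have h2 : k' * w + 2 * w ≤ k * w := by
            calc k' * w + 2 * w = (k' + 2) * w := by ring
              _ ≤ k * w := Nat.mul_le_mul_right w hlt
          omega
    · -- boundedness
      rintro i B ⟨v, hpv, rfl⟩ a ⟨hka, hva⟩ b ⟨hkb, hvb⟩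
      set k := G.dist root v / w with hk
      refine ⟨hconn a b, ?_⟩
      have hab : Rel k a b := Rtrans _ _ _ _ (Rsymm _ _ _ hva) hvb
      obtain ⟨W, hW⟩ := hab
      have hPsup : ∀ z ∈ (W.toPath : G.Walk a b).support, k * w - m ≤ G.dist root z :=
        fun z hz => hW z (SimpleGraph.Walk.support_toPath_subset W hz)
      have hup := TreeNagataAux.upper hconn hacyclic root (k * w - m) (W.toPath : G.Walk a b)
        W.toPath.2 hPsup
      have hlen : (W.toPath : G.Walk a b).length = G.dist a b :=
        TreeNagataAux.path_length_eq hconn hacyclic W.toPath.2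
      rw [hlen] at hup
      have hKa : k * w ≤ G.dist root a := by
        rw [← hka]; exact Nat.div_mul_le_self _ _
      have hUa : G.dist root a < k * w + w := by
        have h1 := Nat.div_add_mod' (G.dist root a) w
        have h2 : G.dist root a % w < w := Nat.mod_lt _ (by omega)
        rw [hka] at h1; omega
      have hUb : G.dist root b < k * w + w := by
        have h1 := Nat.div_add_mod' (G.dist root b) w
        have h2 : G.dist root b % w < w := Nat.mod_lt _ (by omega)
        rw [hkb] at h1; omega
      have hnat : G.dist a b ≤ 3 * n - 5 := by omega
      have hcast : (G.dist a b : ℝ) ≤ ((3 * n - 5 : ℕ) : ℝ) := by exact_mod_cast hnat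
      have heq : ((3 * n - 5 : ℕ) : ℝ) = 3 * (n : ℝ) - 5 := by
        push_cast [Nat.cast_sub (by omega : 5 ≤ 3 * n)]
        ring
      rw [heq] at hcast
      nlinarith [hcast, hnr, hrn]
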